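/- For a discrete plane curve γ_n with δγ_n = ξ_n T_n + η_n N_n, the induced variations satisfy δu_n/u_n = χ_{n+1} - χ_n, δκ_{n+1} = ψ_{n+1} - ψ_n, and δq_n/q_n = χ_n, where χ_n = ξ_{n+1}u_n cos κ_{n+1} - η_{n+1}u_n sin κ_{n+1} - ξ_n and ψ_n = ξ_{n+1}u_n sin κ_{n+1} + η_{n+1}u_n cos κ_{n+1} - η_n. -/

import Mathlib

/-- Rotation by `π/2` in the plane. -/
noncomputable def Jrot (v : EuclideanSpace ℝ (Fin 2)) : EuclideanSpace ℝ (Fin 2) :=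
  WithLp.toLp 2 ![-(v 1), v 0]

/-- Rotation of the plane by angle `κ`. -/
noncomputable def rot (κ : ℝ) (v : EuclideanSpace ℝ (Fin 2)) : EuclideanSpace ℝ (Fin 2) :=
  WithLp.toLp 2 ![Real.cos κ * v 0 - Real.sin κ * v 1, Real.sin κ * v 0 + Real.cos κ * v 1]

lemma affine_hasDerivAt (p w : ℝ) : HasDerivAt (fun ε : ℝ => p + ε * w) w 0 := by
  simpa using ((hasDerivAt_id (0:ℝ)).mul_const w).const_add p

lemma affmul_hasDerivAt (p w r s : ℝ) :
    HasDerivAt (fun ε : ℝ => (p + ε * w) * (r + ε * s)) (w * r + p * s) 0 := by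
  simpa using (affine_hasDerivAt p w).fun_mul (affine_hasDerivAt r s)

lemma sqrt_affine_hasDerivAt (t0 t1 w0 w1 : ℝ) (h : t0^2 + t1^2 ≠ 0) :
    HasDerivAt (fun ε : ℝ => Real.sqrt ((t0 + ε*w0)^2 + (t1 + ε*w1)^2))
      ((t0*w0 + t1*w1) / Real.sqrt (t0^2 + t1^2)) 0 := by
  have h1 : HasDerivAt (fun ε : ℝ => (t0 + ε*w0)^2 + (t1 + ε*w1)^2) (2*(t0*w0+t1*w1)) 0 := by
    have a := (affine_hasDerivAt t0 w0).pow 2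
    have b := (affine_hasDerivAt t1 w1).pow 2
    refine (a.add b).congr_deriv ?_
    push_cast
    ring_nf
  have h2 := h1.sqrt (by simpa using h)
  simp only [zero_mul, add_zero] at h2
  convert h2 using 1
  rw [mul_div_mul_left _ _ (two_ne_zero (α := ℝ))]

/-- First variation formulas for discrete plane curves in similarity
geometry: under the variation `γ_n ↦ γ_n + ε(ξ_n T_n + η_n N_n)` one has
`δu_n/u_n = χ_{n+1} - χ_n`, `δκ_{n+1} = ψ_{n+1} - ψ_n`, `δq_n/q_n = χ_n`. -/
theorem discrete_variation_formulas
    (γ : ℝ → ℤ → EuclideanSpace ℝ (Fin 2))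
    (ξ η : ℤ → ℝ)
    (T : ℝ → ℤ → EuclideanSpace ℝ (Fin 2))
    (hT : ∀ (ε : ℝ) (n : ℤ), T ε n = γ ε (n + 1) - γ ε n)
    (hT0 : ∀ (ε : ℝ) (n : ℤ), T ε n ≠ 0)
    (q : ℝ → ℤ → ℝ) (hq : ∀ (ε : ℝ) (n : ℤ), q ε n = ‖T ε n‖)
    (u : ℝ → ℤ → ℝ) (hu : ∀ (ε : ℝ) (n : ℤ), u ε n = q ε (n + 1) / q ε n)
    (κ : ℝ → ℤ → ℝ)
    (hκdiff : ∀ n : ℤ, Differentiable ℝ (fun ε => κ ε n))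
    (hfrenet : ∀ (ε : ℝ) (n : ℤ), T ε n = u ε (n - 1) • rot (κ ε n) (T ε (n - 1)))
    (hfam : ∀ (ε : ℝ) (n : ℤ),
      γ ε n = γ 0 n + ε • (ξ n • T 0 n + η n • Jrot (T 0 n)))
    (χ ψ : ℤ → ℝ)
    (hχ : ∀ n : ℤ, χ n = ξ (n + 1) * u 0 n * Real.cos (κ 0 (n + 1))
        - η (n + 1) * u 0 n * Real.sin (κ 0 (n + 1)) - ξ n)
    (hψ : ∀ n : ℤ, ψ n = ξ (n + 1) * u 0 n * Real.sin (κ 0 (n + 1))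
        + η (n + 1) * u 0 n * Real.cos (κ 0 (n + 1)) - η n) :
    ∀ n : ℤ,
      HasDerivAt (fun ε => u ε n) (u 0 n * (χ (n + 1) - χ n)) 0
      ∧ HasDerivAt (fun ε => κ ε (n + 1)) (ψ (n + 1) - ψ n) 0
      ∧ HasDerivAt (fun ε => q ε n) (q 0 n * χ n) 0 := by
  have hqpos : ∀ (ε : ℝ) (m : ℤ), 0 < q ε m := fun ε m => by
    rw [hq]; exact norm_pos_iff.mpr (hT0 ε m)
  have hqcoord : ∀ (ε : ℝ) (m : ℤ), q ε m = Real.sqrt ((T ε m 0)^2 + (T ε m 1)^2) := by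
    intro ε m
    rw [hq, EuclideanSpace.norm_eq, Fin.sum_univ_two]
    simp [sq_abs]
  have hqsq : ∀ (ε : ℝ) (m : ℤ), q ε m ^ 2 = (T ε m 0)^2 + (T ε m 1)^2 := by
    intro ε m; rw [hqcoord]
    exact Real.sq_sqrt (by positivity)
  have hq1 : ∀ (ε : ℝ) (m : ℤ), q ε (m+1) = u ε m * q ε m := by
    intro ε m; rw [hu, div_mul_cancel₀ _ (hqpos ε m).ne']
  set W : ℤ → EuclideanSpace ℝ (Fin 2) := fun m =>
    (ξ (m+1) • T 0 (m+1) + η (m+1) • Jrot (T 0 (m+1))) - (ξ m • T 0 m + η m • Jrot (T 0 m))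
    with hWdef
  have hTlin : ∀ (ε : ℝ) (m : ℤ), T ε m = T 0 m + ε • W m := by
    intro ε m
    simp only [hWdef]
    rw [hT ε m, hfam ε (m+1), hfam ε m, hT 0 m]
    module
  have hTcomp : ∀ (ε : ℝ) (m : ℤ) (i : Fin 2), T ε m i = T 0 m i + ε * W m i := by
    intro ε m i
    rw [hTlin ε m]
    simp [PiLp.add_apply, PiLp.smul_apply]
  have hWc : ∀ m : ℤ,
      W m 0 = ξ (m+1) * T 0 (m+1) 0 - η (m+1) * T 0 (m+1) 1 - ξ m * T 0 m 0 + η m * T 0 m 1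
      ∧ W m 1 = ξ (m+1) * T 0 (m+1) 1 + η (m+1) * T 0 (m+1) 0 - ξ m * T 0 m 1 - η m * T 0 m 0 := by
    intro m
    constructor <;>
    · simp only [hWdef]
      simp [Jrot, PiLp.add_apply, PiLp.sub_apply, PiLp.smul_apply]
      ring
  have hy : ∀ m : ℤ,
      T 0 (m+1) 0 = u 0 m * (Real.cos (κ 0 (m+1)) * T 0 m 0 - Real.sin (κ 0 (m+1)) * T 0 m 1)
      ∧ T 0 (m+1) 1 = u 0 m * (Real.sin (κ 0 (m+1)) * T 0 m 0 + Real.cos (κ 0 (m+1)) * T 0 m 1) := by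
    intro m
    have h := hfrenet 0 (m+1)
    rw [add_sub_cancel_right] at h
    constructor <;> rw [h] <;> simp [rot, PiLp.smul_apply]
  have hdot : ∀ m : ℤ,
      T 0 m 0 * W m 0 + T 0 m 1 * W m 1 = ((T 0 m 0)^2 + (T 0 m 1)^2) * χ m := by
    intro m
    rw [(hWc m).1, (hWc m).2, (hy m).1, (hy m).2, hχ m]
    ring
  have hasq : ∀ m : ℤ, HasDerivAt (fun ε => q ε m) (q 0 m * χ m) 0 := by
    intro m
    have hne : (T 0 m 0)^2 + (T 0 m 1)^2 ≠ 0 := by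
      have h1 := hqsq 0 m
      have h2 := hqpos 0 m
      nlinarith
    have h := sqrt_affine_hasDerivAt (T 0 m 0) (T 0 m 1) (W m 0) (W m 1) hne
    have hfun : (fun ε => q ε m)
        = fun ε : ℝ => Real.sqrt ((T 0 m 0 + ε * W m 0)^2 + (T 0 m 1 + ε * W m 1)^2) := by
      funext ε; rw [hqcoord ε m, hTcomp ε m 0, hTcomp ε m 1]
    rw [hfun]
    convert h using 1
    rw [hdot m, ← hqcoord 0 m, ← hqsq 0 m]
    field_simp [(hqpos 0 m).ne']
  intro n
  refine ⟨?_, ?_, hasq n⟩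
  · have hfun : (fun ε => u ε n) = fun ε => q ε (n+1) / q ε n := funext fun ε => hu ε n
    rw [hfun]
    have h := (hasq (n+1)).fun_div (hasq n) (hqpos 0 n).ne'
    refine h.congr_deriv ?_
    rw [hu 0 n]
    field_simp [(hqpos 0 n).ne']
  -- the κ derivative
  · have hdK : HasDerivAt (fun ε => κ ε (n+1)) (deriv (fun ε => κ ε (n+1)) 0) 0 :=
      (hκdiff (n+1) 0).hasDerivAt
    set d := deriv (fun ε => κ ε (n+1)) 0 with hd
    have hRne : ∀ ε : ℝ, q ε n * q ε (n+1) ≠ 0 :=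
      fun ε => (mul_pos (hqpos ε n) (hqpos ε (n+1))).ne'
    have hsin : ∀ ε : ℝ, Real.sin (κ ε (n+1)) * (q ε n * q ε (n+1))
        = T ε n 0 * T ε (n+1) 1 - T ε n 1 * T ε (n+1) 0 := by
      intro ε
      have h := hfrenet ε (n+1)
      rw [add_sub_cancel_right] at h
      have h0 : T ε (n+1) 0
          = u ε n * (Real.cos (κ ε (n+1)) * T ε n 0 - Real.sin (κ ε (n+1)) * T ε n 1) := by
        rw [h]; simp [rot, PiLp.smul_apply]
      have h1 : T ε (n+1) 1
          = u ε n * (Real.sin (κ ε (n+1)) * T ε n 0 + Real.cos (κ ε (n+1)) * T ε n 1) := by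
        rw [h]; simp [rot, PiLp.smul_apply]
      rw [h0, h1, hq1 ε n]
      linear_combination (Real.sin (κ ε (n+1)) * u ε n) * hqsq ε n
    have hcos : ∀ ε : ℝ, Real.cos (κ ε (n+1)) * (q ε n * q ε (n+1))
        = T ε n 0 * T ε (n+1) 0 + T ε n 1 * T ε (n+1) 1 := by
      intro ε
      have h := hfrenet ε (n+1)
      rw [add_sub_cancel_right] at h
      have h0 : T ε (n+1) 0
          = u ε n * (Real.cos (κ ε (n+1)) * T ε n 0 - Real.sin (κ ε (n+1)) * T ε n 1) := by
        rw [h]; simp [rot, PiLp.smul_apply]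
      have h1 : T ε (n+1) 1
          = u ε n * (Real.sin (κ ε (n+1)) * T ε n 0 + Real.cos (κ ε (n+1)) * T ε n 1) := by
        rw [h]; simp [rot, PiLp.smul_apply]
      rw [h0, h1, hq1 ε n]
      linear_combination (Real.cos (κ ε (n+1)) * u ε n) * hqsq ε n
    have hsinfun : (fun ε => Real.sin (κ ε (n+1)))
        = fun ε => (T ε n 0 * T ε (n+1) 1 - T ε n 1 * T ε (n+1) 0) / (q ε n * q ε (n+1)) := by
      funext ε; rw [eq_div_iff (hRne ε)]; exact hsin ε
    have hcosfun : (fun ε => Real.cos (κ ε (n+1)))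
        = fun ε => (T ε n 0 * T ε (n+1) 0 + T ε n 1 * T ε (n+1) 1) / (q ε n * q ε (n+1)) := by
      funext ε; rw [eq_div_iff (hRne ε)]; exact hcos ε
    have hXder : HasDerivAt (fun ε : ℝ => T ε n 0 * T ε (n+1) 1 - T ε n 1 * T ε (n+1) 0)
        (W n 0 * T 0 (n+1) 1 + T 0 n 0 * W (n+1) 1
          - (W n 1 * T 0 (n+1) 0 + T 0 n 1 * W (n+1) 0)) 0 := by
      have hfun : (fun ε : ℝ => T ε n 0 * T ε (n+1) 1 - T ε n 1 * T ε (n+1) 0)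
          = fun ε : ℝ => (T 0 n 0 + ε * W n 0) * (T 0 (n+1) 1 + ε * W (n+1) 1)
            - (T 0 n 1 + ε * W n 1) * (T 0 (n+1) 0 + ε * W (n+1) 0) := by
        funext ε; rw [hTcomp ε n 0, hTcomp ε n 1, hTcomp ε (n+1) 0, hTcomp ε (n+1) 1]
      rw [hfun]
      exact (affmul_hasDerivAt _ _ _ _).sub (affmul_hasDerivAt _ _ _ _)
    have hDder : HasDerivAt (fun ε : ℝ => T ε n 0 * T ε (n+1) 0 + T ε n 1 * T ε (n+1) 1)
        (W n 0 * T 0 (n+1) 0 + T 0 n 0 * W (n+1) 0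
          + (W n 1 * T 0 (n+1) 1 + T 0 n 1 * W (n+1) 1)) 0 := by
      have hfun : (fun ε : ℝ => T ε n 0 * T ε (n+1) 0 + T ε n 1 * T ε (n+1) 1)
          = fun ε : ℝ => (T 0 n 0 + ε * W n 0) * (T 0 (n+1) 0 + ε * W (n+1) 0)
            + (T 0 n 1 + ε * W n 1) * (T 0 (n+1) 1 + ε * W (n+1) 1) := by
        funext ε; rw [hTcomp ε n 0, hTcomp ε n 1, hTcomp ε (n+1) 0, hTcomp ε (n+1) 1]
      rw [hfun]
      exact (affmul_hasDerivAt _ _ _ _).add (affmul_hasDerivAt _ _ _ _)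
    have hRder : HasDerivAt (fun ε => q ε n * q ε (n+1))
        (q 0 n * χ n * q 0 (n+1) + q 0 n * (q 0 (n+1) * χ (n+1))) 0 :=
      (hasq n).fun_mul (hasq (n+1))
    have hS := hXder.div hRder (hRne 0)
    have hC := hDder.div hRder (hRne 0)
    have hS' : HasDerivAt (fun ε => Real.sin (κ ε (n+1))) (Real.cos (κ 0 (n+1)) * d) 0 := by
      simpa using hdK.sin
    have hC' : HasDerivAt (fun ε => Real.cos (κ ε (n+1))) (-Real.sin (κ 0 (n+1)) * d) 0 := by
      simpa using hdK.cos
    rw [hsinfun] at hS'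
    rw [hcosfun] at hC'
    have eq1 := hS'.unique hS
    have eq2 := hC'.unique hC
    rw [eq_div_iff (pow_ne_zero 2 (hRne 0))] at eq1 eq2
    have hR0 : q 0 n * q 0 (n+1) = u 0 n * ((T 0 n 0)^2 + (T 0 n 1)^2) := by
      rw [hq1 0 n, ← hqsq 0 n]; ring
    have hkey : Real.cos (κ 0 (n+1)) * (W n 0 * T 0 (n+1) 1 + T 0 n 0 * W (n+1) 1
          - (W n 1 * T 0 (n+1) 0 + T 0 n 1 * W (n+1) 0))
        - Real.sin (κ 0 (n+1)) * (W n 0 * T 0 (n+1) 0 + T 0 n 0 * W (n+1) 0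
          + (W n 1 * T 0 (n+1) 1 + T 0 n 1 * W (n+1) 1))
        = (u 0 n * ((T 0 n 0)^2 + (T 0 n 1)^2)) * (ψ (n+1) - ψ n) := by
      rw [(hWc n).1, (hWc n).2, (hWc (n+1)).1, (hWc (n+1)).2,
        (hy (n+1)).1, (hy (n+1)).2, (hy n).1, (hy n).2, hψ (n+1), hψ n]
      linear_combination (u 0 n * ((T 0 n 0)^2 + (T 0 n 1)^2)
        * (η n - η (n+1) + Real.sin (κ 0 (n+1+1)) * u 0 (n+1) * ξ (n+1+1)
          + Real.cos (κ 0 (n+1+1)) * u 0 (n+1) * η (n+1+1)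
          - Real.sin (κ 0 (n+1)) * u 0 n * ξ (n+1)
          - Real.cos (κ 0 (n+1)) * u 0 n * η (n+1)))
        * Real.sin_sq_add_cos_sq (κ 0 (n+1))
    have hsin0 := hsin 0
    have hcos0 := hcos 0
    have hpyth := Real.sin_sq_add_cos_sq (κ 0 (n+1))
    have hfinal : d * (q 0 n * q 0 (n+1))^2 = (ψ (n+1) - ψ n) * (q 0 n * q 0 (n+1))^2 := by
      linear_combination Real.cos (κ 0 (n+1)) * eq1 - Real.sin (κ 0 (n+1)) * eq2
        + (q 0 n * q 0 (n+1)) * hkey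
        - (d * (q 0 n * q 0 (n+1))^2) * hpyth
        + ((q 0 n * χ n * q 0 (n+1) + q 0 n * (q 0 (n+1) * χ (n+1))) * Real.cos (κ 0 (n+1))) * hsin0
        - ((q 0 n * χ n * q 0 (n+1) + q 0 n * (q 0 (n+1) * χ (n+1))) * Real.sin (κ 0 (n+1))) * hcos0
        - ((q 0 n * q 0 (n+1)) * (ψ (n+1) - ψ n)) * hR0
    have hdval : d = ψ (n+1) - ψ n :=
      mul_right_cancel₀ (pow_ne_zero 2 (hRne 0)) hfinal
    rw [← hdval]
    exact hdK
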